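/- For a Lie algebra L and k ≥ 1, the k-th term of the lower central series of L is zero (i.e., all nested brackets of k+1 elements vanish) if and only if every linear endomorphism of L is a Leibniz-derivation of order k. -/

import Mathlib

open Finset

/-- Right-nested bracket `[x₁,[x₂,…,[x_k,x_{k+1}]…]]` of a list of elements. -/
def nestedBracket {L : Type*} [LieRing L] : List L → L
  | [] => 0
  | [x] => x
  | x :: xs => ⁅x, nestedBracket xs⁆

/-- A Leibniz-derivation of order `k` of a Lie algebra. -/
def IsLeibnizDerivation {F L : Type*} [CommRing F] [LieRing L] [LieAlgebra F L] (k : ℕ)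
    (P : L →ₗ[F] L) : Prop :=
  ∀ x : Fin (k + 1) → L,
    P (nestedBracket (List.ofFn x)) =
      ∑ i : Fin (k + 1), nestedBracket (List.ofFn (Function.update x i (P (x i))))

namespace NBaux

variable {F L : Type*}

section LieRing
variable [LieRing L]

lemma nb_cons (x : L) (l : List L) (h : l ≠ []) :
    nestedBracket (x :: l) = ⁅x, nestedBracket l⁆ := by
  cases l with
  | nil => exact absurd rfl h
  | cons y t => rfl

lemma nb_append_pair (l : List L) (a : L) : nestedBracket (l ++ [a, a]) = 0 := by
  induction l with
  | nil => simp [nestedBracket]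
  | cons x t ih =>
    rw [List.cons_append, nb_cons _ _ (by simp), ih, lie_zero]

omit [LieRing L] in
lemma ofFn_update {n : ℕ} (x : Fin n → L) (i : Fin n) (c : L) :
    List.ofFn (Function.update x i c) = (List.ofFn x).set i c := by
  apply List.ext_getElem (by simp)
  intro j h1 h2
  rw [List.getElem_ofFn, List.getElem_set]
  rcases eq_or_ne (i : ℕ) j with h | h
  · have : (⟨j, by simpa using h1⟩ : Fin n) = i := by simp [Fin.ext_iff, ← h]
    rw [if_pos h, this, Function.update_self]
  · have : (⟨j, by simpa using h1⟩ : Fin n) ≠ i := by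
      exact fun hh => h (congrArg Fin.val hh).symm
    rw [if_neg h, Function.update_of_ne this, List.getElem_ofFn]

end LieRing

section LieAlgebra
variable [Field F] [LieRing L] [LieAlgebra F L]

lemma nb_set_smul (s : F) (c : L) :
    ∀ (l : List L) (i : ℕ), i < l.length →
      nestedBracket (l.set i (s • c)) = s • nestedBracket (l.set i c) := by
  intro l
  induction l with
  | nil => intro i hi; simp at hi
  | cons a tl ih =>
    intro i hi
    match i with
    | 0 =>
      rw [List.set_cons_zero, List.set_cons_zero]
      cases tl with
      | nil => rfl
      | cons b t =>
        show ⁅s • c, nestedBracket (b :: t)⁆ = s • ⁅c, nestedBracket (b :: t)⁆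
        rw [smul_lie]
    | (j+1) =>
      have hj : j < tl.length := by simpa using hi
      have hne : tl.set j (s • c) ≠ [] :=
        List.ne_nil_of_length_pos (by rw [List.length_set]; omega)
      have hne' : tl.set j c ≠ [] :=
        List.ne_nil_of_length_pos (by rw [List.length_set]; omega)
      rw [List.set_cons_succ, List.set_cons_succ, nb_cons _ _ hne, nb_cons _ _ hne',
        ih j hj, lie_smul]

variable {k : ℕ}

lemma B_update_smul (x : Fin (k+1) → L) (i : Fin (k+1)) (t : F) (c : L) :
    nestedBracket (List.ofFn (Function.update x i (t • c)))
      = t • nestedBracket (List.ofFn (Function.update x i c)) := by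
  rw [ofFn_update, ofFn_update, nb_set_smul t c _ _ (by simpa using i.isLt)]

include F in
lemma B_update_zero (x : Fin (k+1) → L) (i : Fin (k+1)) :
    nestedBracket (List.ofFn (Function.update x i (0 : L))) = 0 := by
  have := B_update_smul (F := F) x i (0 : F) (0 : L)
  simpa using this

lemma star (hH : ∀ P : L →ₗ[F] L, IsLeibnizDerivation k P)
    (f : L →ₗ[F] F) (c : L) (x : Fin (k+1) → L) :
    f (nestedBracket (List.ofFn x)) • c
      = ∑ i : Fin (k+1), f (x i) • nestedBracket (List.ofFn (Function.update x i c)) := by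
  have h := hH (f.smulRight c) x
  simp only [LinearMap.smulRight_apply] at h
  rw [h]
  exact Finset.sum_congr rfl fun i _ => B_update_smul x i (f (x i)) c

end LieAlgebra


section More
variable [Field F] [LieRing L] [LieAlgebra F L] {k : ℕ}

lemma exists_dual {V : Type*} [AddCommGroup V] [Module F V] (v : V) (hv : v ≠ 0) :
    ∃ f : V →ₗ[F] F, f v = 1 := by
  obtain ⟨φ, hφ⟩ : ∃ φ : Module.Dual F V, φ v ≠ 0 := by
    by_contra hcon
    push_neg at hcon
    exact hv ((Module.forall_dual_apply_eq_zero_iff F v).mp hcon)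
  exact ⟨(φ v)⁻¹ • φ, by simp [inv_mul_cancel₀ hφ]⟩

lemma B_head (hk : 1 ≤ k) (y : Fin (k+1) → L) :
    nestedBracket (List.ofFn y)
      = ⁅y 0, nestedBracket (List.ofFn (fun i : Fin k => y i.succ))⁆ := by
  rw [List.ofFn_succ, nb_cons]
  exact List.ne_nil_of_length_pos (by simp [hk]; omega)

lemma B_last_two (hk : 1 ≤ k) (y : Fin (k+1) → L)
    (h : y (Fin.last k) = y ⟨k-1, by omega⟩) :
    nestedBracket (List.ofFn y) = 0 := by
  obtain ⟨m, rfl⟩ : ∃ m, k = m + 1 := ⟨k - 1, (Nat.succ_pred_eq_of_pos hk).symm⟩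
  have hidx : ((Fin.last m).castSucc : Fin (m+2)) = ⟨m + 1 - 1, by omega⟩ := by
    simp [Fin.ext_iff]
  rw [List.ofFn_succ' y, List.ofFn_succ' (fun i : Fin (m+1) => y i.castSucc),
    List.concat_eq_append, List.concat_eq_append, List.append_assoc]
  have : [y ((Fin.last m).castSucc)] ++ [y (Fin.last (m+1))]
      = [y ⟨m + 1 - 1, by omega⟩, y ⟨m + 1 - 1, by omega⟩] := by
    rw [hidx, h]
    rfl
  rw [this]
  exact nb_append_pair _ _

lemma B_replicate (a z : L) : ∀ m : ℕ,
    nestedBracket (List.replicate m a ++ [z]) = ((LieAlgebra.ad F L a)^m) z := by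
  intro m
  induction m with
  | zero => simp [nestedBracket]
  | succ m ih =>
    rw [List.replicate_succ, List.cons_append, nb_cons _ _ (by simp), ih, pow_succ',
      Module.End.mul_apply]
    rfl

lemma ofFn_update_const_last (a z : L) :
    List.ofFn (Function.update (fun _ : Fin (k+1) => a) (Fin.last k) z)
      = List.replicate k a ++ [z] := by
  rw [List.ofFn_succ']
  have h1 : (fun i : Fin k =>
      Function.update (fun _ : Fin (k+1) => a) (Fin.last k) z i.castSucc)
      = fun _ : Fin k => a := by
    funext i
    exact Function.update_of_ne (Fin.castSucc_lt_last i).ne z (fun _ => a)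
  have h2 : Function.update (fun _ : Fin (k+1) => a) (Fin.last k) z (Fin.last k) = z :=
    Function.update_self _ _ _
  rw [show (fun i : Fin k => Function.update (fun _ : Fin (k+1) => a) (Fin.last k) z
      i.castSucc) = fun _ : Fin k => a from h1, h2, List.ofFn_const, List.concat_eq_append]

end More
end NBaux

namespace NBaux
section Main
variable [Field F] [LieRing L] [LieAlgebra F L] {k : ℕ}

lemma lemA (hk : 1 ≤ k) (hH : ∀ P : L →ₗ[F] L, IsLeibnizDerivation k P)
    (x : Fin (k+1) → L)
    (hsp : Submodule.span F (Set.range fun i : Fin k => x i.castSucc) ≠ ⊤) :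
    nestedBracket (List.ofFn x) = 0 := by
  set W : Submodule F L := Submodule.span F (Set.range fun i : Fin k => x i.castSucc) with hW
  obtain ⟨z₀, hz₀⟩ : ∃ z₀, z₀ ∉ W := by
    by_contra hcon
    push_neg at hcon
    exact hsp (Submodule.eq_top_iff'.mpr hcon)
  have hq : W.mkQ z₀ ≠ 0 := by
    rw [Submodule.mkQ_apply, Ne, Submodule.Quotient.mk_eq_zero]
    exact hz₀
  obtain ⟨φ, hφ⟩ := exists_dual (F := F) (W.mkQ z₀) hq
  set f : L →ₗ[F] F := φ ∘ₗ W.mkQ with hf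
  have hfW : ∀ i : Fin (k+1), i ≠ Fin.last k → f (x i) = 0 := by
    intro i hi
    obtain ⟨j, rfl⟩ := Fin.eq_castSucc_of_ne_last hi
    have hmem : x j.castSucc ∈ W := Submodule.subset_span ⟨j, rfl⟩
    have : W.mkQ (x j.castSucc) = 0 := by
      rw [Submodule.mkQ_apply, Submodule.Quotient.mk_eq_zero]
      exact hmem
    simp [hf, this]
  have key : ∀ z c : L,
      f (nestedBracket (List.ofFn (Function.update x (Fin.last k) z))) • c
        = f z • nestedBracket (List.ofFn (Function.update x (Fin.last k) c)) := by
    intro z c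
    have h := star hH f c (Function.update x (Fin.last k) z)
    rw [h, Finset.sum_eq_single (Fin.last k)]
    · rw [Function.update_self, Function.update_idem]
    · intro i _ hi
      rw [Function.update_of_ne hi, hfW i hi, zero_smul]
    · intro habs
      exact absurd (Finset.mem_univ _) habs
  have hfz₀ : f z₀ = 1 := by simpa [hf] using hφ
  set μ : F := f (nestedBracket (List.ofFn (Function.update x (Fin.last k) z₀))) with hμdef
  have hBc : ∀ c : L,
      nestedBracket (List.ofFn (Function.update x (Fin.last k) c)) = μ • c := by
    intro c
    have := key z₀ c
    rw [hfz₀, one_smul] at this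
    exact this.symm
  have hpk : k - 1 < k + 1 := by omega
  set p : Fin (k+1) := ⟨k-1, hpk⟩ with hp
  have hp_ne : p ≠ Fin.last k := by
    intro hcon
    have : k - 1 = k := by simpa [Fin.ext_iff, hp] using hcon
    omega
  by_cases hxp : x p = 0
  · calc nestedBracket (List.ofFn x)
        = nestedBracket (List.ofFn (Function.update x p (0 : L))) := by
          rw [← hxp, Function.update_eq_self]
      _ = 0 := B_update_zero (F := F) x p
  · have hdup : nestedBracket (List.ofFn (Function.update x (Fin.last k) (x p))) = 0 := by
      apply B_last_two hk
      rw [Function.update_self, Function.update_of_ne hp_ne]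
    rw [hBc (x p)] at hdup
    have hμ : μ = 0 := by
      rcases smul_eq_zero.mp hdup with h | h
      · exact h
      · exact absurd h hxp
    have := hBc (x (Fin.last k))
    rw [Function.update_eq_self] at this
    rw [this, hμ, zero_smul]

lemma lemCentral (hk : 1 ≤ k) (hH : ∀ P : L →ₗ[F] L, IsLeibnizDerivation k P)
    (z : L) (hz : ∀ u : L, ⁅z, u⁆ = 0) (hz0 : z ≠ 0) (x : Fin (k+1) → L) :
    nestedBracket (List.ofFn x) = 0 := by
  obtain ⟨f, hfz⟩ := exists_dual (F := F) z hz0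
  set P : L →ₗ[F] L := f.smulRight (x 0) with hP
  set w : Fin (k+1) → L := Function.update x 0 z with hw
  have hw0 : w 0 = z := Function.update_self _ _ _
  have hBw : nestedBracket (List.ofFn w) = 0 := by
    rw [B_head hk w, hw0, hz]
  have h := hH P w
  rw [hBw, map_zero] at h
  have hterm : ∀ i : Fin (k+1), i ∈ Finset.univ → i ≠ 0 →
      nestedBracket (List.ofFn (Function.update w i (P (w i)))) = 0 := by
    intro i _ hi
    rw [B_head hk, Function.update_of_ne (Ne.symm hi), hw0, hz]
  have h0 : nestedBracket (List.ofFn (Function.update w 0 (P (w 0))))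
      = nestedBracket (List.ofFn x) := by
    rw [hw0]
    have hPz : P z = x 0 := by
      rw [hP, LinearMap.smulRight_apply, hfz, one_smul]
    rw [hw, Function.update_idem, hPz, Function.update_eq_self]
  rw [Finset.sum_eq_single_of_mem 0 (Finset.mem_univ _) hterm, h0] at h
  exact h.symm

end Main
end NBaux

open NBaux in
theorem nestedBrackets_vanish_iff_all_endos_leibnizDerivations
    {F L : Type*} [Field F] [LieRing L] [LieAlgebra F L] {k : ℕ} (hk : 1 ≤ k) :
    (∀ x : Fin (k + 1) → L, nestedBracket (List.ofFn x) = 0) ↔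
      ∀ P : L →ₗ[F] L, IsLeibnizDerivation k P := by
  constructor
  · intro h P x
    rw [h x, map_zero]
    exact (Finset.sum_eq_zero fun i _ => h _).symm
  · intro hH x
    by_cases hsp : Submodule.span F (Set.range fun i : Fin k => x i.castSucc) = ⊤
    swap
    · exact lemA hk hH x hsp
    rcases subsingleton_or_nontrivial L with hss | hnt
    · exact Subsingleton.elim _ _
    have hfin : Module.Finite F L :=
      Module.finite_def.mpr ⟨(Set.finite_range fun i : Fin k => x i.castSucc).toFinset, by
        rw [Set.Finite.coe_toFinset]; exact hsp⟩
    by_cases hcen : ∃ z : L, (∀ u : L, ⁅z, u⁆ = 0) ∧ z ≠ 0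
    · obtain ⟨z, hz, hz0⟩ := hcen
      exact lemCentral hk hH z hz hz0 x
    exfalso
    by_cases habel : ∃ a : L, Submodule.span F {a} = ⊤
    · obtain ⟨a, ha⟩ := habel
      have hab : ∀ u v : L, ⁅u, v⁆ = 0 := by
        intro u v
        obtain ⟨c, rfl⟩ := Submodule.mem_span_singleton.mp (ha ▸ Submodule.mem_top (x := u))
        obtain ⟨d, rfl⟩ := Submodule.mem_span_singleton.mp (ha ▸ Submodule.mem_top (x := v))
        rw [smul_lie, lie_smul, lie_self, smul_zero, smul_zero]
      obtain ⟨u, hu⟩ := exists_ne (0 : L)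
      exact hcen ⟨u, fun v => hab u v, hu⟩
    push_neg at habel
    have hNe : Nonempty (Fin k) := ⟨⟨0, hk⟩⟩
    have had : ∀ a : L, IsNilpotent (LieAlgebra.ad F L a) := by
      intro a
      refine ⟨k, ?_⟩
      ext z
      have hx' := lemA hk hH (Function.update (fun _ : Fin (k+1) => a) (Fin.last k) z) ?_
      · rw [ofFn_update_const_last, B_replicate (F := F)] at hx'
        simpa using hx'
      · have heq : (fun i : Fin k =>
            Function.update (fun _ : Fin (k+1) => a) (Fin.last k) z i.castSucc)
            = fun _ : Fin k => a := by
          funext i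
          exact Function.update_of_ne (Fin.castSucc_lt_last i).ne z (fun _ => a)
        rw [heq, Set.range_const]
        exact habel a
    have hnil : LieRing.IsNilpotent L := (LieAlgebra.isNilpotent_iff_forall (R := F) (L := L)).mpr had
    haveI := hnil
    have hcnt : Nontrivial (LieAlgebra.center F L) :=
      LieAlgebra.non_trivial_center_of_isNilpotent
    obtain ⟨z, hz0'⟩ := exists_ne (0 : LieAlgebra.center F L)
    apply hcen
    refine ⟨(z : L), fun u => ?_, ?_⟩
    · have hmem := z.2
      rw [LieModule.mem_maxTrivSubmodule] at hmem
      rw [← lie_skew, hmem u, neg_zero]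
    · simpa using hz0'
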